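/- Let k be a field of characteristic p > 0 and f = x_1^d + ... + x_n^d in k[x_1,...,x_n]. Then f^{p-1} ∉ (x_1^p,...,x_n^p) if and only if there exist nonnegative integers i_1, ..., i_n with i_1 + ... + i_n = p - 1 and d·i_j ≤ p - 1 for all j. -/

import Mathlib

open MvPolynomial

lemma prod_X_pow_eq_monomial' {k : Type*} [CommSemiring k] {n : ℕ} (g : Fin n → ℕ) :
    (∏ j : Fin n, (X j : MvPolynomial (Fin n) k) ^ g j) =
      monomial (Finsupp.equivFunOnFinite.symm g) 1 := by
  have h : (Finsupp.equivFunOnFinite.symm g : Fin n →₀ ℕ) =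
      ∑ j : Fin n, Finsupp.single j (g j) := by
    ext a
    simp [Finsupp.single_apply, Finset.sum_ite_eq' Finset.univ a g]
  rw [h, monomial_sum_one]
  simp [X_pow_eq_monomial]

theorem fermat_fpure_iff_composition (k : Type*) [Field k] (p : ℕ) [CharP k p]
    (hp : 0 < p) (n d : ℕ) (hd : 1 ≤ d) :
    ((∑ i : Fin n, (X i : MvPolynomial (Fin n) k) ^ d) ^ (p - 1) ∉
        Ideal.span (Set.range fun i : Fin n => (X i : MvPolynomial (Fin n) k) ^ p)) ↔
      ∃ i : Fin n → ℕ, ∑ j, i j = p - 1 ∧ ∀ j, d * i j ≤ p - 1 := by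
  haveI : NeZero p := ⟨hp.ne'⟩
  have hprime : p.Prime := (CharP.char_is_prime_or_zero k p).resolve_right hp.ne'
  -- rewrite the generating set as a set of monomials
  have hset : (Set.range fun i : Fin n => (X i : MvPolynomial (Fin n) k) ^ p) =
      (fun s => monomial s (1 : k)) '' (Set.range fun i : Fin n => Finsupp.single i p) := by
    ext q
    simp only [Set.mem_range, Set.mem_image, X_pow_eq_monomial]
    constructor
    · rintro ⟨i, rfl⟩; exact ⟨Finsupp.single i p, ⟨i, rfl⟩, rfl⟩
    · rintro ⟨s, ⟨i, rfl⟩, rfl⟩; exact ⟨i, rfl⟩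
  -- the multinomial expansion
  have hexp : (∑ i : Fin n, (X i : MvPolynomial (Fin n) k) ^ d) ^ (p - 1) =
      ∑ c ∈ Finset.piAntidiag Finset.univ (p - 1),
        monomial (Finsupp.equivFunOnFinite.symm fun j => d * c j)
          ((Nat.multinomial Finset.univ c : k)) := by
    rw [Finset.sum_pow_eq_sum_piAntidiag]
    refine Finset.sum_congr rfl fun c _ => ?_
    have : ∏ i : Fin n, ((X i : MvPolynomial (Fin n) k) ^ d) ^ c i =
        ∏ i : Fin n, (X i : MvPolynomial (Fin n) k) ^ (d * c i) := by
      simp [pow_mul]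
    rw [this, prod_X_pow_eq_monomial', ← C_eq_coe_nat, C_mul_monomial, mul_one]
  -- nonvanishing of multinomial coefficients
  have hmul : ∀ c : Fin n → ℕ, (∑ j, c j) = p - 1 →
      (Nat.multinomial Finset.univ c : k) ≠ 0 := by
    intro c hc h0
    rw [CharP.cast_eq_zero_iff k p] at h0
    have hspec := Nat.multinomial_spec Finset.univ c
    rw [hc] at hspec
    have : p ∣ Nat.factorial (p - 1) := hspec ▸ h0.mul_left _
    have := (Nat.Prime.dvd_factorial hprime).mp this
    omega
  rw [hset]
  constructor
  · -- not in ideal → exists composition  (contrapositive)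
    intro hnotmem
    by_contra hno
    push_neg at hno
    apply hnotmem
    rw [hexp]
    refine Ideal.sum_mem _ fun c hc => ?_
    rw [Finset.mem_piAntidiag] at hc
    obtain ⟨j, hj⟩ := hno c hc.1
    have hjp : p ≤ d * c j := by omega
    have hle : Finsupp.single j p ≤ Finsupp.equivFunOnFinite.symm fun j => d * c j :=
      Finsupp.single_le_iff.mpr (by simpa using hjp)
    have : (monomial (Finsupp.equivFunOnFinite.symm fun j => d * c j)
        ((Nat.multinomial Finset.univ c : k))) =
        monomial (Finsupp.single j p) 1 *
          monomial ((Finsupp.equivFunOnFinite.symm fun j => d * c j) - Finsupp.single j p)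
            ((Nat.multinomial Finset.univ c : k)) := by
      rw [monomial_mul, one_mul, add_tsub_cancel_of_le hle]
    rw [this]
    exact Ideal.mul_mem_right _ _ (Ideal.subset_span ⟨_, ⟨j, rfl⟩, rfl⟩)
  · -- composition → not in ideal
    rintro ⟨i, hi, hile⟩ hmem
    rw [mem_ideal_span_monomial_image] at hmem
    -- the monomial corresponding to d • i has nonzero coefficient
    have hi_mem : i ∈ Finset.piAntidiag (Finset.univ : Finset (Fin n)) (p - 1) := by
      rw [Finset.mem_piAntidiag]; exact ⟨hi, fun _ _ => Finset.mem_univ _⟩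
    have hcoeff : coeff (Finsupp.equivFunOnFinite.symm fun j => d * i j)
        ((∑ x : Fin n, (X x : MvPolynomial (Fin n) k) ^ d) ^ (p - 1)) =
        (Nat.multinomial Finset.univ i : k) := by
      rw [hexp, coeff_sum]
      rw [Finset.sum_eq_single i]
      · simp [coeff_monomial]
      · intro c hc hne
        rw [coeff_monomial, if_neg]
        intro h
        apply hne
        have := Finsupp.equivFunOnFinite.symm.injective h
        funext j
        have hj := congrFun this j
        exact Nat.eq_of_mul_eq_mul_left (by omega) hj
      · intro h; exact absurd hi_mem h
    have hsupp : (Finsupp.equivFunOnFinite.symm fun j => d * i j) ∈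
        ((∑ x : Fin n, (X x : MvPolynomial (Fin n) k) ^ d) ^ (p - 1)).support := by
      rw [mem_support_iff, hcoeff]
      exact hmul i hi
    obtain ⟨si, ⟨j, rfl⟩, hle⟩ := hmem _ hsupp
    have := Finsupp.single_le_iff.mp hle
    simp only [Finsupp.coe_equivFunOnFinite_symm] at this
    have := hile j
    omega
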